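/- In a coded caching system with N files, K users, cache parameter r ∈ {0,...,K}, and symmetric batch prefetching, for the demand vector where all users request the same file (Ne(d) = 1), the min-rank of the induced index coding problem equals binomial(K-1, r), which also equals binomial(K, r+1) - binomial(K-1, r+1). -/

import Mathlib

open Finset Module Submodule

section Aux

variable {F : Type*} [Field F] {K N r : ℕ}

/-- Lower bound: any valid linear index code has rank at least `C(K-1, r)`. -/
lemma stmt18_lower (hK : 0 < K) (i0 : Fin N)
    (V : {p : Fin K × Finset (Fin K) // p.2.card = r ∧ p.1 ∉ p.2} →
        (Fin N × Finset (Fin K)) → F)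
    (hV : ∀ rc msg, V rc msg ≠ 0 → (msg.2.card = r ∧ rc.1.1 ∈ msg.2)) :
    (K - 1).choose r ≤ Module.finrank F (Submodule.span F
      (Set.range fun rc => V rc + Pi.single (i0, rc.1.2) (1 : F))) := by
  classical
  set k0 : Fin K := ⟨0, hK⟩
  set v := fun rc => V rc + Pi.single (i0, rc.1.2) (1 : F) with hv
  -- index type: r-subsets avoiding k0
  set ι := {A : Finset (Fin K) // A.card = r ∧ k0 ∉ A}
  have hcard : Fintype.card ι = (K - 1).choose r := by
    rw [Fintype.card_subtype]
    have : (Finset.univ.filter fun A : Finset (Fin K) => A.card = r ∧ k0 ∉ A)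
        = ({k0}ᶜ : Finset (Fin K)).powersetCard r := by
      ext A
      simp [Finset.mem_powersetCard, Finset.subset_compl_singleton, and_comm]
    rw [this, Finset.card_powersetCard, Finset.card_compl, Finset.card_singleton,
      Fintype.card_fin]
  let e : ι → {p : Fin K × Finset (Fin K) // p.2.card = r ∧ p.1 ∉ p.2} :=
    fun A => ⟨(k0, A.1), A.2.1, A.2.2⟩
  let u : ι → (Fin N × Finset (Fin K)) → F := fun A => v (e A)
  -- projection onto coordinates (i0, A) with A avoiding k0
  let π : ((Fin N × Finset (Fin K)) → F) →ₗ[F] (ι → F) :=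
    LinearMap.funLeft F F (fun A : ι => (i0, A.1))
  have hπu : (π ∘ u) = fun A : ι => Pi.single A (1 : F) := by
    funext A A'
    have hV0 : V (e A) (i0, A'.1) = 0 := by
      by_contra h
      exact A'.2.2 (hV (e A) (i0, A'.1) h).2
    show u A (i0, A'.1) = _
    simp only [u, hv, Pi.add_apply, hV0, zero_add, Pi.single_apply]
    congr 1
    simp [Prod.ext_iff, Subtype.coe_inj, eq_comm]
    exact ⟨fun h => by subst h; rfl, fun h => (Subtype.ext h).symm⟩
  have hli : LinearIndependent F u := by
    apply LinearIndependent.of_comp π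
    rw [hπu]
    have hb : ⇑(Pi.basisFun F ι) = fun A : ι => Pi.single A (1 : F) :=
      funext fun i => Pi.basisFun_apply F ι i
    rw [← hb]
    exact (Pi.basisFun F ι).linearIndependent
  have hsub : Set.range u ⊆ Set.range v := by
    rintro _ ⟨A, rfl⟩; exact ⟨e A, rfl⟩
  calc (K - 1).choose r = Fintype.card ι := hcard.symm
    _ ≤ (Set.range u).finrank F := linearIndependent_iff_card_le_finrank_span.mp hli
    _ ≤ (Set.range v).finrank F := Set.finrank_mono hsub

end Aux

section Aux2

variable {α : Type*} [DecidableEq α]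

lemma aux_card_insert_erase {A : Finset α} {a j : α} (ha : a ∉ A) (hj : j ∈ A) :
    ((insert a A).erase j).card = A.card := by
  rw [Finset.card_erase_of_mem (Finset.mem_insert_of_mem hj),
    Finset.card_insert_of_notMem ha]
  omega

lemma aux_set_key {A : Finset α} {k k0 j : α} (hk : k ∉ A) (hk0 : k0 ∉ A)
    (hkk0 : k ≠ k0) (hj : j ∈ A) :
    (insert k0 ((insert k A).erase j)).erase k = (insert k0 A).erase j := by
  rw [Finset.erase_insert_of_ne hkk0.symm, Finset.erase_right_comm,
    Finset.erase_insert hk, Finset.erase_insert_of_ne (fun h => hk0 (by rw [h]; exact hj))]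

end Aux2

section Aux3

variable {F : Type*} [Field F] {K N r : ℕ}

lemma stmt18_mem (hK : 0 < K) (i0 : Fin N) :
    ∃ V : {p : Fin K × Finset (Fin K) // p.2.card = r ∧ p.1 ∉ p.2} →
        (Fin N × Finset (Fin K)) → F,
      (∀ rc msg, V rc msg ≠ 0 → (msg.2.card = r ∧ rc.1.1 ∈ msg.2)) ∧
      (K - 1).choose r = Module.finrank F (Submodule.span F
        (Set.range fun rc => V rc + Pi.single (i0, rc.1.2) (1 : F))) := by
  classical
  set k0 : Fin K := ⟨0, hK⟩ with hk0def
  set μ : Finset (Fin K) → (Fin N × Finset (Fin K)) → F :=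
    fun B => Pi.single (i0, B) 1 with hμdef
  have hμ : ∀ B msg, μ B msg ≠ 0 → msg = (i0, B) := by
    intro B msg h
    by_contra h'
    simp [hμdef, Pi.single_apply, h'] at h
  set w : Finset (Fin K) → (Fin N × Finset (Fin K)) → F :=
    fun B => μ B + ∑ j ∈ B, μ ((insert k0 B).erase j) with hwdef
  set V : {p : Fin K × Finset (Fin K) // p.2.card = r ∧ p.1 ∉ p.2} →
      (Fin N × Finset (Fin K)) → F := fun rc =>
    if rc.1.1 = k0 then ∑ j ∈ rc.1.2, μ ((insert k0 rc.1.2).erase j)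
    else if k0 ∈ rc.1.2 then
      μ (insert rc.1.1 (rc.1.2.erase k0))
        + ∑ j ∈ rc.1.2.erase k0, μ ((insert rc.1.1 rc.1.2).erase j)
    else
      -∑ j ∈ rc.1.2, (μ ((insert rc.1.1 rc.1.2).erase j)
        + ∑ j' ∈ ((insert rc.1.1 rc.1.2).erase j).erase rc.1.1,
            μ ((insert k0 ((insert rc.1.1 rc.1.2).erase j)).erase j')) with hVdef
  have hVsupp : ∀ rc msg, V rc msg ≠ 0 → (msg.2.card = r ∧ rc.1.1 ∈ msg.2) := by
    rintro ⟨⟨k, A⟩, hA, hkA⟩ msg h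
    simp only [hVdef] at h
    simp only at hA hkA ⊢
    split_ifs at h with h1 h2
    · -- k = k0
      rw [Finset.sum_apply] at h
      obtain ⟨j, hj, hne⟩ := Finset.exists_ne_zero_of_sum_ne_zero h
      obtain rfl := hμ _ _ hne
      subst h1
      refine ⟨by rw [aux_card_insert_erase hkA hj]; exact hA, ?_⟩
      exact Finset.mem_erase.2 ⟨fun h' => hkA (h' ▸ hj), Finset.mem_insert_self _ _⟩
    · -- k ≠ k0, k0 ∈ A
      rw [Pi.add_apply] at h
      have hor : μ (insert k (A.erase k0)) msg ≠ 0 ∨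
          (∑ j ∈ A.erase k0, μ ((insert k A).erase j)) msg ≠ 0 := by
        by_contra hc
        push_neg at hc
        rw [hc.1, hc.2, add_zero] at h
        exact h rfl
      rcases hor with hc | hc
      · obtain rfl := hμ _ _ hc
        have hr : 0 < r := hA ▸ Finset.card_pos.2 ⟨k0, h2⟩
        refine ⟨?_, Finset.mem_insert_self _ _⟩
        rw [Finset.card_insert_of_notMem (fun h' => hkA (Finset.mem_of_mem_erase h')),
          Finset.card_erase_of_mem h2, hA]
        omega
      · rw [Finset.sum_apply] at hc
        obtain ⟨j, hj, hne⟩ := Finset.exists_ne_zero_of_sum_ne_zero hc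
        obtain rfl := hμ _ _ hne
        have hjA : j ∈ A := Finset.mem_of_mem_erase hj
        refine ⟨by rw [aux_card_insert_erase hkA hjA]; exact hA, ?_⟩
        exact Finset.mem_erase.2 ⟨fun h' => hkA (h' ▸ hjA), Finset.mem_insert_self _ _⟩
    · -- k ≠ k0, k0 ∉ A
      rw [Pi.neg_apply, neg_ne_zero, Finset.sum_apply] at h
      obtain ⟨j, hj, hne⟩ := Finset.exists_ne_zero_of_sum_ne_zero h
      rw [Pi.add_apply] at hne
      have hor : μ ((insert k A).erase j) msg ≠ 0 ∨
          (∑ j' ∈ ((insert k A).erase j).erase k,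
            μ ((insert k0 ((insert k A).erase j)).erase j')) msg ≠ 0 := by
        by_contra hc
        push_neg at hc
        rw [hc.1, hc.2, add_zero] at hne
        exact hne rfl
      rcases hor with hc | hc
      · obtain rfl := hμ _ _ hc
        refine ⟨by rw [aux_card_insert_erase hkA hj]; exact hA, ?_⟩
        exact Finset.mem_erase.2 ⟨fun h' => hkA (h' ▸ hj), Finset.mem_insert_self _ _⟩
      · rw [Finset.sum_apply] at hc
        obtain ⟨j', hj', hne'⟩ := Finset.exists_ne_zero_of_sum_ne_zero hc
        obtain rfl := hμ _ _ hne'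
        have hkB : k ∈ (insert k A).erase j :=
          Finset.mem_erase.2 ⟨fun h' => hkA (h' ▸ hj), Finset.mem_insert_self _ _⟩
        have hk0B : k0 ∉ (insert k A).erase j := fun h' => by
          rcases Finset.mem_insert.1 (Finset.mem_of_mem_erase h') with h'' | h''
          · exact h1 h''.symm
          · exact h2 h''
        have hj'B : j' ∈ (insert k A).erase j := Finset.mem_of_mem_erase hj'
        refine ⟨?_, ?_⟩
        · rw [aux_card_insert_erase hk0B hj'B, aux_card_insert_erase hkA hj]; exact hA
        · exact Finset.mem_erase.2
            ⟨fun h' => (Finset.mem_erase.1 hj').1 h'.symm, Finset.mem_insert_of_mem hkB⟩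
  refine ⟨V, hVsupp, ?_⟩
  -- rank computation
  set S : Finset (Finset (Fin K)) := ({k0}ᶜ : Finset (Fin K)).powersetCard r with hSdef
  have hSmem : ∀ B : Finset (Fin K), B ∈ S ↔ (B.card = r ∧ k0 ∉ B) := by
    intro B
    simp [hSdef, Finset.mem_powersetCard, Finset.subset_compl_singleton, and_comm]
  set W : Submodule F ((Fin N × Finset (Fin K)) → F) :=
    Submodule.span F ((S.image w : Finset _) : Set ((Fin N × Finset (Fin K)) → F)) with hWdef
  have hwW : ∀ B ∈ S, w B ∈ W := fun B hB =>
    Submodule.subset_span (by exact_mod_cast Finset.mem_image_of_mem w hB)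
  -- each code vector lies in W
  have hvW : ∀ rc : {p : Fin K × Finset (Fin K) // p.2.card = r ∧ p.1 ∉ p.2},
      V rc + Pi.single (i0, rc.1.2) (1 : F) ∈ W := by
    rintro ⟨⟨k, A⟩, hA, hkA⟩
    simp only at hA hkA
    have hμA : (Pi.single ((i0, A) : Fin N × Finset (Fin K)) (1 : F)) = μ A := by
      rw [hμdef]
    by_cases h1 : k = k0
    · have : V ⟨(k, A), hA, hkA⟩ + Pi.single (i0, A) (1 : F) = w A := by
        simp only [hVdef, if_pos h1, hμA, hwdef]
        exact add_comm _ _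
      show V ⟨(k, A), hA, hkA⟩ + Pi.single (i0, A) (1 : F) ∈ W
      rw [this]
      exact hwW A ((hSmem A).2 ⟨hA, h1 ▸ hkA⟩)
    · by_cases h2 : k0 ∈ A
      · have hkAe : k ∉ A.erase k0 := fun h => hkA (Finset.mem_of_mem_erase h)
        have hins : insert k0 (insert k (A.erase k0)) = insert k A := by
          rw [Finset.insert_comm, Finset.insert_erase h2]
        have hBw : w (insert k (A.erase k0)) = μ (insert k (A.erase k0))
            + (μ A + ∑ j ∈ A.erase k0, μ ((insert k A).erase j)) := by
          simp only [hwdef]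
          rw [hins, Finset.sum_insert hkAe, Finset.erase_insert hkA]
        have : V ⟨(k, A), hA, hkA⟩ + Pi.single (i0, A) (1 : F)
            = w (insert k (A.erase k0)) := by
          simp only [hVdef, if_neg h1, if_pos h2, hμA, hBw]
          abel
        show V ⟨(k, A), hA, hkA⟩ + Pi.single (i0, A) (1 : F) ∈ W
        rw [this]
        refine hwW _ ((hSmem _).2 ⟨?_, ?_⟩)
        · have hr : 0 < r := hA ▸ Finset.card_pos.2 ⟨k0, h2⟩
          rw [Finset.card_insert_of_notMem hkAe, Finset.card_erase_of_mem h2, hA]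
          omega
        · intro h'
          rcases Finset.mem_insert.1 h' with h'' | h''
          · exact h1 h''.symm
          · exact Finset.notMem_erase _ _ h''
      · -- main case: k ≠ k0, k0 ∉ A
        have hwB : ∀ j ∈ A, w ((insert k A).erase j)
            = (μ ((insert k A).erase j) + ∑ j' ∈ ((insert k A).erase j).erase k,
                μ ((insert k0 ((insert k A).erase j)).erase j'))
              + μ ((insert k0 A).erase j) := by
          intro j hj
          have hkB : k ∈ (insert k A).erase j :=
            Finset.mem_erase.2 ⟨fun h' => hkA (h' ▸ hj), Finset.mem_insert_self _ _⟩
          simp only [hwdef]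
          rw [← Finset.add_sum_erase _ _ hkB, aux_set_key hkA h2 h1 hj]
          abel
        have hv3 : V ⟨(k, A), hA, hkA⟩ + Pi.single (i0, A) (1 : F)
            = w A - ∑ j ∈ A, w ((insert k A).erase j) := by
          simp only [hVdef, if_neg h1, if_neg h2, hμA]
          rw [Finset.sum_congr rfl hwB]
          simp only [hwdef, Finset.sum_add_distrib]
          abel
        show V ⟨(k, A), hA, hkA⟩ + Pi.single (i0, A) (1 : F) ∈ W
        rw [hv3]
        refine sub_mem (hwW A ((hSmem A).2 ⟨hA, h2⟩)) (Submodule.sum_mem _ ?_)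
        intro j hj
        refine hwW _ ((hSmem _).2 ⟨by rw [aux_card_insert_erase hkA hj]; exact hA, ?_⟩)
        intro h'
        rcases Finset.mem_insert.1 (Finset.mem_of_mem_erase h') with h'' | h''
        · exact h1 h''.symm
        · exact h2 h''
  haveI : FiniteDimensional F ((Fin N × Finset (Fin K)) → F) := inferInstance
  refine le_antisymm ?_ ?_
  · exact stmt18_lower hK i0 V hVsupp
  · have hle : Submodule.span F
        (Set.range fun rc => V rc + Pi.single (i0, rc.1.2) (1 : F)) ≤ W := by
      rw [Submodule.span_le]
      rintro _ ⟨rc, rfl⟩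
      exact hvW rc
    have hW1 : Module.finrank F W ≤ (S.image w).card := by
      simpa [Set.finrank] using finrank_span_finset_le_card (R := F) (S.image w)
    have hW2 : (S.image w).card ≤ (K - 1).choose r := by
      refine le_trans Finset.card_image_le ?_
      rw [hSdef, Finset.card_powersetCard, Finset.card_compl, Finset.card_singleton,
        Fintype.card_fin]
    exact le_trans (le_trans (Submodule.finrank_mono hle) hW1) hW2

end Aux3



/-- For symmetric batch prefetching with all users demanding the same file `i0`
(`Ne(d) = 1`), the min-rank of the induced index coding problem equals `C(K-1, r)`,
which also equals `C(K, r+1) - C(K-1, r+1)`. -/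
theorem stmt18 {F : Type*} [Field F] (K N r : ℕ) (hK : 0 < K) (hN : 0 < N)
    (hr : r ≤ K) (i0 : Fin N) :
    sInf {c : ℕ |
        ∃ V : {p : Fin K × Finset (Fin K) // p.2.card = r ∧ p.1 ∉ p.2} →
            (Fin N × Finset (Fin K)) → F,
          (∀ rc msg, V rc msg ≠ 0 → (msg.2.card = r ∧ rc.1.1 ∈ msg.2)) ∧
          c = Module.finrank F (Submodule.span F
            (Set.range fun rc => V rc + Pi.single (i0, rc.1.2) (1 : F)))}
      = (K - 1).choose r ∧
    (K - 1).choose r = K.choose (r + 1) - (K - 1).choose (r + 1) := by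
  have hmem : (K - 1).choose r ∈ {c : ℕ |
      ∃ V : {p : Fin K × Finset (Fin K) // p.2.card = r ∧ p.1 ∉ p.2} →
          (Fin N × Finset (Fin K)) → F,
        (∀ rc msg, V rc msg ≠ 0 → (msg.2.card = r ∧ rc.1.1 ∈ msg.2)) ∧
        c = Module.finrank F (Submodule.span F
          (Set.range fun rc => V rc + Pi.single (i0, rc.1.2) (1 : F)))} := by
    obtain ⟨V, hV, heq⟩ := stmt18_mem (F := F) (N := N) (r := r) hK i0
    exact ⟨V, hV, heq⟩
  refine ⟨le_antisymm (Nat.sInf_le hmem) (le_csInf ⟨_, hmem⟩ ?_), ?_⟩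
  · rintro b ⟨V, hV, rfl⟩
    exact stmt18_lower hK i0 V hV
  · have hp : K.choose (r + 1) = (K - 1).choose r + (K - 1).choose (r + 1) := by
      conv_lhs => rw [← Nat.succ_pred_eq_of_pos hK]
      exact Nat.choose_succ_succ (K - 1) r
    omega
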